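/- (Polarization vanishing) Let G be a commutative semigroup, S a commutative group, and A : G^n → S a symmetric n-additive function with diagonalization A*. Then for m > n and all x, y₁,…,yₘ ∈ G, the iterated difference Δ_{y₁}⋯Δ_{yₘ} A*(x) = 0. -/

import Mathlib

/-- The difference operator `Δ_y f (x) = f (x + y) - f x`. -/
def deltaOp {G S : Type*} [Add G] [Sub S] (y : G) (f : G → S) : G → S :=
  fun x => f (x + y) - f x

section Aux

variable {G S : Type*} [AddCommSemigroup G] [AddCommGroup S] {n : ℕ}

lemma deltaOp_zero (y : G) : deltaOp y (0 : G → S) = 0 := by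
  funext x; simp [deltaOp]

lemma deltaOp_sum {ι : Type*} (y : G) (s : Finset ι) (f : ι → G → S) :
    deltaOp y (∑ t ∈ s, f t) = ∑ t ∈ s, deltaOp y (f t) := by
  funext x; simp [deltaOp, Finset.sum_apply, Finset.sum_sub_distrib]

lemma foldr_deltaOp_zero (ys : List G) : ys.foldr deltaOp (0 : G → S) = 0 := by
  induction ys with
  | nil => rfl
  | cons y ys ih => simp [List.foldr, ih, deltaOp_zero]

lemma foldr_deltaOp_sum {ι : Type*} (ys : List G) (s : Finset ι) (f : ι → G → S) :
    ys.foldr deltaOp (∑ t ∈ s, f t) = ∑ t ∈ s, ys.foldr deltaOp (f t) := by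
  induction ys with
  | nil => rfl
  | cons y ys ih => simp [List.foldr, ih, deltaOp_sum]

lemma expand (A : (Fin n → G) → S)
    (hadd : ∀ (v : Fin n → G) (i : Fin n) (a b : G),
      A (Function.update v i (a + b)) =
        A (Function.update v i a) + A (Function.update v i b)) :
    ∀ (F : Finset (Fin n)) (u v : G) (w : Fin n → G),
      A (fun i => if i ∈ F then u + v else w i)
        = ∑ T ∈ F.powerset, A (fun i => if i ∈ T then v else if i ∈ F then u else w i) := by
  intro F
  induction F using Finset.induction_on with
  | empty => intro u v w; simp
  | @insert i F' hi ih =>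
    intro u v w
    have h1 : (fun j => if j ∈ insert i F' then u + v else w j)
        = Function.update (fun j => if j ∈ F' then u + v else w j) i (u + v) := by
      funext j
      by_cases hj : j = i
      · subst hj; simp [Function.update]
      · simp [Function.update, hj, Finset.mem_insert]
    have h2 : Function.update (fun j => if j ∈ F' then u + v else w j) i u
        = fun j => if j ∈ F' then u + v else Function.update w i u j := by
      funext j
      by_cases hj : j = i
      · subst hj; simp [Function.update, hi]
      · simp [Function.update, hj]
    have h3 : Function.update (fun j => if j ∈ F' then u + v else w j) i v
        = fun j => if j ∈ F' then u + v else Function.update w i v j := by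
      funext j
      by_cases hj : j = i
      · subst hj; simp [Function.update, hi]
      · simp [Function.update, hj]
    rw [h1, hadd, h2, h3, ih u v (Function.update w i u), ih u v (Function.update w i v)]
    rw [Finset.powerset_insert, Finset.sum_union, Finset.sum_image]
    · congr 1
      · apply Finset.sum_congr rfl
        intro T hT
        rw [Finset.mem_powerset] at hT
        have hiT : i ∉ T := fun h => hi (hT h)
        congr 1
        funext j
        by_cases hj : j = i
        · subst hj; simp [Function.update, hiT, hi]
        · simp [Function.update, hj, Finset.mem_insert]
      · apply Finset.sum_congr rfl
        intro T hT
        rw [Finset.mem_powerset] at hT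
        have hiT : i ∉ T := fun h => hi (hT h)
        congr 1
        funext j
        by_cases hj : j = i
        · subst hj; simp [Function.update, hiT, hi]
        · simp [Function.update, hj, Finset.mem_insert]
    · intro T hT T' hT' h
      rw [Finset.mem_coe, Finset.mem_powerset] at hT hT'
      have hiT : i ∉ T := fun hh => hi (hT hh)
      have hiT' : i ∉ T' := fun hh => hi (hT' hh)
      ext j
      constructor
      · intro hj
        have hmem : j ∈ insert i T' := h ▸ Finset.mem_insert_of_mem hj
        rcases Finset.mem_insert.mp hmem with hji | hj'
        · exact absurd (hji ▸ hj) hiT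
        · exact hj'
      · intro hj
        have hmem : j ∈ insert i T := h ▸ Finset.mem_insert_of_mem hj
        rcases Finset.mem_insert.mp hmem with hji | hj'
        · exact absurd (hji ▸ hj) hiT'
        · exact hj'
    · rw [Finset.disjoint_left]
      intro T hT hT'
      rw [Finset.mem_powerset] at hT
      rw [Finset.mem_image] at hT'
      obtain ⟨T', _, rfl⟩ := hT'
      exact hi (hT (Finset.mem_insert_self i T'))

lemma key (A : (Fin n → G) → S)
    (hadd : ∀ (v : Fin n → G) (i : Fin n) (a b : G),
      A (Function.update v i (a + b)) =
        A (Function.update v i a) + A (Function.update v i b)) :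
    ∀ (F : Finset (Fin n)) (w : Fin n → G) (ys : List G), F.card < ys.length →
      ys.foldr deltaOp (fun x => A fun i => if i ∈ F then x else w i) = 0 := by
  intro F
  induction F using Finset.strongInduction with
  | _ F ih =>
    intro w ys hlen
    rcases ys.eq_nil_or_concat with rfl | ⟨ys', y, rfl⟩
    · simp at hlen
    · rw [List.concat_eq_append, List.foldr_append]
      simp only [List.foldr]
      have hδ : deltaOp y (fun x => A fun i => if i ∈ F then x else w i)
          = ∑ T ∈ F.powerset.erase ∅,
              fun x => A fun i => if i ∈ F \ T then x else if i ∈ T then y else w i := by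
        funext x
        simp only [deltaOp, Finset.sum_apply]
        rw [expand A hadd F x y w,
          ← Finset.sum_erase_add _ _ (Finset.empty_mem_powerset F)]
        simp only [Finset.notMem_empty, if_false, add_sub_cancel_right]
        apply Finset.sum_congr rfl
        intro T hT
        have hTF : T ⊆ F := Finset.mem_powerset.mp (Finset.mem_of_mem_erase hT)
        congr 1
        funext i
        by_cases hiT : i ∈ T
        · simp [hiT, Finset.mem_sdiff]
        · by_cases hiF : i ∈ F
          · simp [hiT, hiF, Finset.mem_sdiff]
          · simp [hiT, hiF, Finset.mem_sdiff]
      rw [hδ, foldr_deltaOp_sum]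
      apply Finset.sum_eq_zero
      intro T hT
      have hne : T ≠ ∅ := (Finset.mem_erase.mp hT).1
      have hTF : T ⊆ F := Finset.mem_powerset.mp (Finset.mem_of_mem_erase hT)
      have hss : F \ T ⊂ F :=
        Finset.sdiff_ssubset hTF (Finset.nonempty_iff_ne_empty.mpr hne)
      apply ih _ hss
      have h1 : (F \ T).card < F.card := Finset.card_lt_card hss
      have h2 : F.card ≤ ys'.length := by
        simpa [Nat.lt_succ_iff] using hlen
      exact lt_of_lt_of_le h1 h2

end Aux

theorem stmt_5 {G S : Type*} [AddCommSemigroup G] [AddCommGroup S]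
    (n m : ℕ) (hn : 0 < n) (hm : n < m) (A : (Fin n → G) → S)
    (hsymm : ∀ (σ : Equiv.Perm (Fin n)) (v : Fin n → G), A (v ∘ σ) = A v)
    (hadd : ∀ (v : Fin n → G) (i : Fin n) (a b : G),
      A (Function.update v i (a + b)) =
        A (Function.update v i a) + A (Function.update v i b))
    (x : G) (y : Fin m → G) :
    ((List.ofFn y).foldr deltaOp (fun z => A fun _ => z)) x = 0 := by
  have hfun : (fun z => A fun _ => z)
      = fun z => A fun i => if i ∈ (Finset.univ : Finset (Fin n)) then z else x := by
    simp
  have h := key A hadd Finset.univ (fun _ => x) (List.ofFn y) (by simpa using hm)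
  rw [hfun]
  exact congrFun h x
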